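/- Let 0 < b < a be real numbers, let (aₙ), (bₙ) be the arithmetic-geometric mean iteration a₀ = a, b₀ = b, a_{n+1} = (aₙ + bₙ)/2, b_{n+1} = √(aₙ bₙ), and let M be their common limit. Then G(a, b) = π/(2M), where G(a,b) denotes the integral from 0 to π/2 of 1/√(a² cos²θ + b² sin²θ) dθ. -/

import Mathlib

open Real Filter MeasureTheory Set

noncomputable def gaussG (c d x : ℝ) : ℝ := 1 / Real.sqrt ((x ^ 2 + c ^ 2) * (x ^ 2 + d ^ 2))

lemma gaussG_tan (c d : ℝ) (hc : 0 < c) (hd : 0 < d) :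
    ∫ θ in (0:ℝ)..(π / 2),
        1 / Real.sqrt (c ^ 2 * Real.cos θ ^ 2 + d ^ 2 * Real.sin θ ^ 2) =
      ∫ x in Ioi (0:ℝ), gaussG c d x := by
  have himg : (fun θ => d * Real.tan θ) '' Ioo 0 (π / 2) = Ioi 0 := by
    apply Subset.antisymm
    · rintro y ⟨θ, hθ, rfl⟩
      exact mul_pos hd (Real.tan_pos_of_pos_of_lt_pi_div_two hθ.1 hθ.2)
    · intro y hy
      have h0 : (0:ℝ) < Real.arctan (y / d) := by
        have := Real.arctan_strictMono (div_pos hy hd)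
        rwa [Real.arctan_zero] at this
      refine ⟨Real.arctan (y / d), ⟨h0, Real.arctan_lt_pi_div_two _⟩, ?_⟩
      show d * Real.tan (Real.arctan (y / d)) = y
      rw [Real.tan_arctan]
      field_simp
  have hderiv : ∀ θ ∈ Ioo (0:ℝ) (π / 2),
      HasDerivWithinAt (fun θ => d * Real.tan θ) (d / Real.cos θ ^ 2) (Ioo 0 (π / 2)) θ := by
    intro θ hθ
    have hcos : Real.cos θ ≠ 0 := by
      have : 0 < Real.cos θ := Real.cos_pos_of_mem_Ioo ⟨by linarith [hθ.1, pi_div_two_pos], hθ.2⟩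
      exact this.ne'
    have := (Real.hasDerivAt_tan hcos).const_mul d
    simpa [div_eq_mul_inv] using this.hasDerivWithinAt
  have hinj : InjOn (fun θ => d * Real.tan θ) (Ioo 0 (π / 2)) := by
    intro x hx y hy h
    have hsub : Ioo (0:ℝ) (π/2) ⊆ Ioo (-(π/2)) (π/2) := by
      intro z hz; exact ⟨by linarith [hz.1, pi_div_two_pos], hz.2⟩
    simp only [] at h
    exact Real.strictMonoOn_tan.injOn (hsub hx) (hsub hy) (mul_left_cancel₀ hd.ne' h)
  have key := integral_image_eq_integral_abs_deriv_smul measurableSet_Ioo hderiv hinj (gaussG c d)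
  rw [himg] at key
  rw [key, intervalIntegral.integral_of_le (by positivity : (0:ℝ) ≤ π/2),
    MeasureTheory.integral_Ioc_eq_integral_Ioo]
  refine setIntegral_congr_fun measurableSet_Ioo fun θ hθ => ?_
  have hcos : 0 < Real.cos θ := Real.cos_pos_of_mem_Ioo ⟨by linarith [hθ.1, pi_div_two_pos], hθ.2⟩
  have hS : 0 < c ^ 2 * Real.cos θ ^ 2 + d ^ 2 * Real.sin θ ^ 2 := by
    have h1 : 0 < c ^ 2 * Real.cos θ ^ 2 := by positivity
    nlinarith [sq_nonneg (d * Real.sin θ)]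
  have hiden : ((d * Real.tan θ) ^ 2 + c ^ 2) * ((d * Real.tan θ) ^ 2 + d ^ 2)
      = (c ^ 2 * Real.cos θ ^ 2 + d ^ 2 * Real.sin θ ^ 2) * (d / Real.cos θ ^ 2) ^ 2 := by
    rw [Real.tan_eq_sin_div_cos]
    have := Real.sin_sq_add_cos_sq θ
    field_simp
    linear_combination (d ^ 2 * Real.sin θ ^ 2 + Real.cos θ ^ 2 * c ^ 2) * this
  have hpos : (0:ℝ) < d / Real.cos θ ^ 2 := by positivity
  simp only [smul_eq_mul, gaussG]
  rw [hiden, Real.sqrt_mul hS.le, Real.sqrt_sq hpos.le, abs_of_pos hpos]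
  have h1 : Real.sqrt (c ^ 2 * Real.cos θ ^ 2 + d ^ 2 * Real.sin θ ^ 2) ≠ 0 :=
    (Real.sqrt_pos.2 hS).ne'
  field_simp



lemma gaussG_step (c d : ℝ) (hc : 0 < c) (hd : 0 < d) :
    ∫ x in Ioi (0:ℝ), gaussG c d x
      = ∫ x in Ioi (0:ℝ), gaussG ((c + d) / 2) (Real.sqrt (c * d)) x := by
  set c1 := (c + d) / 2 with hc1
  set d1 := Real.sqrt (c * d) with hd1
  set f : ℝ → ℝ := fun x => (x - c * d / x) / 2 with hf
  set f' : ℝ → ℝ := fun x => (1 + c * d / x ^ 2) / 2 with hf'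
  have hcd : 0 < c * d := mul_pos hc hd
  have hxpos : ∀ y : ℝ, 0 < y + Real.sqrt (y ^ 2 + c * d) := by
    intro y
    have h1 : |y| < Real.sqrt (y ^ 2 + c * d) := by
      rw [← Real.sqrt_sq_eq_abs]
      exact Real.sqrt_lt_sqrt (sq_nonneg y) (by linarith)
    have h2 := neg_le_abs y
    linarith
  have himg : f '' Ioi 0 = univ := by
    apply Subset.antisymm (subset_univ _)
    intro y _
    refine ⟨y + Real.sqrt (y ^ 2 + c * d), hxpos y, ?_⟩
    show (y + Real.sqrt (y ^ 2 + c * d) - c * d / (y + Real.sqrt (y ^ 2 + c * d))) / 2 = y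
    have hsq : Real.sqrt (y ^ 2 + c * d) ^ 2 = y ^ 2 + c * d := Real.sq_sqrt (by positivity)
    have hx := hxpos y
    field_simp
    nlinarith [hsq]
  have hderiv : ∀ x ∈ Ioi (0:ℝ), HasDerivWithinAt f (f' x) (Ioi 0) x := by
    intro x hx
    have hx0 : (x:ℝ) ≠ 0 := (mem_Ioi.1 hx).ne'
    have h2 : HasDerivAt (fun x : ℝ => x - c * d * x⁻¹) (1 - c * d * (-(x ^ 2)⁻¹)) x :=
      (hasDerivAt_id x).sub ((hasDerivAt_inv hx0).const_mul (c * d))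
    have h3 := h2.div_const 2
    have h4 : HasDerivAt (fun x : ℝ => (x - c * d * x⁻¹) / 2) (f' x) x := by
      refine h3.congr_deriv ?_
      simp only [hf']
      field_simp
      ring
    have h5 : HasDerivAt f (f' x) x := by
      apply h4.congr_of_eventuallyEq
      filter_upwards [] with z
      simp [hf, div_eq_mul_inv, mul_comm]
    exact h5.hasDerivWithinAt
  have hinj : InjOn f (Ioi 0) := by
    have hm : StrictMonoOn f (Ioi 0) := by
      intro x hx y hy hxy
      have hx0 : (0:ℝ) < x := hx
      show (x - c * d / x) / 2 < (y - c * d / y) / 2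
      have : c * d / y < c * d / x := div_lt_div_of_pos_left hcd hx0 hxy
      linarith
    exact hm.injOn
  have key := integral_image_eq_integral_abs_deriv_smul measurableSet_Ioi hderiv hinj (gaussG c1 d1)
  rw [himg, setIntegral_univ] at key
  have heven : ∫ x : ℝ, gaussG c1 d1 x = ∫ x : ℝ, gaussG c1 d1 |x| := by
    congr 1; funext x; simp [gaussG, sq_abs]
  have hdouble : ∫ x : ℝ, gaussG c1 d1 x = 2 * ∫ x in Ioi (0:ℝ), gaussG c1 d1 x := by
    rw [heven, integral_comp_abs]
  have hrhs : ∫ x in Ioi (0:ℝ), |f' x| • gaussG c1 d1 (f x)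
      = ∫ x in Ioi (0:ℝ), 2 * gaussG c d x := by
    refine setIntegral_congr_fun measurableSet_Ioi fun x hx => ?_
    have hx0 : (0:ℝ) < x := hx
    have hf'pos : 0 < f' x := by
      simp only [hf']
      positivity
    have hP : (0:ℝ) < (x ^ 2 + c ^ 2) * (x ^ 2 + d ^ 2) := by positivity
    have hQ : (0:ℝ) < (x + c * d / x) / (4 * x) := by positivity
    have hprod : ((f x) ^ 2 + c1 ^ 2) * ((f x) ^ 2 + d1 ^ 2)
        = ((x ^ 2 + c ^ 2) * (x ^ 2 + d ^ 2)) * ((x + c * d / x) / (4 * x)) ^ 2 := by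
      simp only [hf, hc1, hd1]
      rw [Real.sq_sqrt hcd.le]
      field_simp
      ring
    have hsP : Real.sqrt ((x ^ 2 + c ^ 2) * (x ^ 2 + d ^ 2)) ≠ 0 := (Real.sqrt_pos.2 hP).ne'
    simp only [smul_eq_mul, gaussG]
    rw [hprod, Real.sqrt_mul hP.le, Real.sqrt_sq hQ.le, abs_of_pos hf'pos]
    simp only [hf']
    have hne : (1 + c * d / x ^ 2) ≠ 0 := by positivity
    have hx0' : x ≠ 0 := hx0.ne'
    field_simp
    ring
  rw [key, hrhs, MeasureTheory.integral_const_mul] at hdouble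
  linarith [hdouble]


lemma gaussG_bounds (c d : ℝ) (hd : 0 < d) (hdc : d ≤ c) :
    π / (2 * c) ≤ (∫ θ in (0:ℝ)..(π / 2),
        1 / Real.sqrt (c ^ 2 * Real.cos θ ^ 2 + d ^ 2 * Real.sin θ ^ 2)) ∧
    (∫ θ in (0:ℝ)..(π / 2),
        1 / Real.sqrt (c ^ 2 * Real.cos θ ^ 2 + d ^ 2 * Real.sin θ ^ 2)) ≤ π / (2 * d) := by
  have hc : 0 < c := lt_of_lt_of_le hd hdc
  have hS : ∀ θ : ℝ, d ^ 2 ≤ c ^ 2 * Real.cos θ ^ 2 + d ^ 2 * Real.sin θ ^ 2 := by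
    intro θ
    have hsq : d ^ 2 ≤ c ^ 2 := by nlinarith
    nlinarith [Real.sin_sq_add_cos_sq θ, mul_nonneg (sub_nonneg.2 hsq) (sq_nonneg (Real.cos θ))]
  have hSpos : ∀ θ : ℝ, 0 < c ^ 2 * Real.cos θ ^ 2 + d ^ 2 * Real.sin θ ^ 2 := by
    intro θ; have := hS θ; nlinarith
  have hS2 : ∀ θ : ℝ, c ^ 2 * Real.cos θ ^ 2 + d ^ 2 * Real.sin θ ^ 2 ≤ c ^ 2 := by
    intro θ
    have hsq : d ^ 2 ≤ c ^ 2 := by nlinarith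
    nlinarith [Real.sin_sq_add_cos_sq θ, mul_nonneg (sub_nonneg.2 hsq) (sq_nonneg (Real.sin θ))]
  have hcont : Continuous fun θ : ℝ =>
      1 / Real.sqrt (c ^ 2 * Real.cos θ ^ 2 + d ^ 2 * Real.sin θ ^ 2) := by
    apply Continuous.div continuous_const (Continuous.sqrt (by continuity))
    intro θ
    exact (Real.sqrt_pos.2 (hSpos θ)).ne'
  have hint : IntervalIntegrable (fun θ : ℝ =>
      1 / Real.sqrt (c ^ 2 * Real.cos θ ^ 2 + d ^ 2 * Real.sin θ ^ 2)) volume 0 (π / 2) :=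
    hcont.intervalIntegrable _ _
  have hlow : ∀ θ : ℝ, 1 / c ≤ 1 / Real.sqrt (c ^ 2 * Real.cos θ ^ 2 + d ^ 2 * Real.sin θ ^ 2) := by
    intro θ
    have h1 : Real.sqrt (c ^ 2 * Real.cos θ ^ 2 + d ^ 2 * Real.sin θ ^ 2) ≤ c := by
      calc Real.sqrt _ ≤ Real.sqrt (c ^ 2) := Real.sqrt_le_sqrt (hS2 θ)
        _ = c := Real.sqrt_sq hc.le
    exact one_div_le_one_div_of_le (Real.sqrt_pos.2 (hSpos θ)) h1
  have hhigh : ∀ θ : ℝ, 1 / Real.sqrt (c ^ 2 * Real.cos θ ^ 2 + d ^ 2 * Real.sin θ ^ 2) ≤ 1 / d := by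
    intro θ
    have h1 : d ≤ Real.sqrt (c ^ 2 * Real.cos θ ^ 2 + d ^ 2 * Real.sin θ ^ 2) := by
      calc d = Real.sqrt (d ^ 2) := (Real.sqrt_sq hd.le).symm
        _ ≤ _ := Real.sqrt_le_sqrt (hS θ)
    exact one_div_le_one_div_of_le hd h1
  have hpi : (0:ℝ) ≤ π / 2 := by positivity
  constructor
  · have h := intervalIntegral.integral_mono_on hpi
      (intervalIntegrable_const (c := 1 / c)) hint (fun θ _ => hlow θ)
    rw [intervalIntegral.integral_const, smul_eq_mul, sub_zero] at h
    calc π / (2 * c) = π / 2 * (1 / c) := by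
          rw [div_mul_div_comm, mul_one]
      _ ≤ _ := h
  · have h := intervalIntegral.integral_mono_on hpi
      hint (intervalIntegrable_const (c := 1 / d)) (fun θ _ => hhigh θ)
    rw [intervalIntegral.integral_const, smul_eq_mul, sub_zero] at h
    calc (∫ θ in (0:ℝ)..(π / 2),
        1 / Real.sqrt (c ^ 2 * Real.cos θ ^ 2 + d ^ 2 * Real.sin θ ^ 2)) ≤ π / 2 * (1 / d) := h
      _ = π / (2 * d) := by rw [div_mul_div_comm, mul_one]

theorem gauss_agm_limit (a b : ℝ) (hb : 0 < b) (hab : b < a)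
    (A B : ℕ → ℝ) (hA0 : A 0 = a) (hB0 : B 0 = b)
    (hA : ∀ n, A (n + 1) = (A n + B n) / 2)
    (hB : ∀ n, B (n + 1) = Real.sqrt (A n * B n))
    (M : ℝ) (hMA : Tendsto A atTop (nhds M)) (hMB : Tendsto B atTop (nhds M)) :
    ∫ θ in (0:ℝ)..(π / 2),
        1 / Real.sqrt (a ^ 2 * Real.cos θ ^ 2 + b ^ 2 * Real.sin θ ^ 2) =
      π / (2 * M) := by
  have ha : 0 < a := hb.trans hab
  -- basic AGM facts
  have hP : ∀ n, 0 < B n ∧ B n ≤ A n ∧ b ≤ B n := by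
    intro n
    induction n with
    | zero => exact ⟨hB0 ▸ hb, by rw [hA0, hB0]; exact hab.le, hB0.ge⟩
    | succ n ih =>
      obtain ⟨h1, h2, h3⟩ := ih
      have hA' : 0 < A n := h1.trans_le h2
      have hmul : 0 < A n * B n := mul_pos hA' h1
      have hb' : 0 < B (n + 1) := by rw [hB n]; exact Real.sqrt_pos.2 hmul
      have hle : B (n + 1) ≤ A (n + 1) := by
        rw [hB n, hA n]
        calc Real.sqrt (A n * B n) ≤ Real.sqrt (((A n + B n) / 2) ^ 2) :=
              Real.sqrt_le_sqrt (by nlinarith [sq_nonneg (A n - B n)])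
          _ = (A n + B n) / 2 := Real.sqrt_sq (by linarith)
      have hmon : B n ≤ B (n + 1) := by
        rw [hB n]
        calc B n = Real.sqrt (B n ^ 2) := (Real.sqrt_sq h1.le).symm
          _ ≤ Real.sqrt (A n * B n) := Real.sqrt_le_sqrt (by nlinarith)
      exact ⟨hb', hle, h3.trans hmon⟩
  -- invariance of the integral
  have hG : ∀ n, (∫ θ in (0:ℝ)..(π / 2),
      1 / Real.sqrt (a ^ 2 * Real.cos θ ^ 2 + b ^ 2 * Real.sin θ ^ 2))
      = ∫ x in Ioi (0:ℝ), gaussG (A n) (B n) x := by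
    intro n
    induction n with
    | zero => rw [hA0, hB0]; exact gaussG_tan a b ha hb
    | succ n ih =>
      obtain ⟨h1, h2, _⟩ := hP n
      rw [ih, hA n, hB n]
      exact gaussG_step (A n) (B n) (h1.trans_le h2) h1
  have hbound : ∀ n, π / (2 * A n) ≤ (∫ θ in (0:ℝ)..(π / 2),
      1 / Real.sqrt (a ^ 2 * Real.cos θ ^ 2 + b ^ 2 * Real.sin θ ^ 2)) ∧
      (∫ θ in (0:ℝ)..(π / 2),
      1 / Real.sqrt (a ^ 2 * Real.cos θ ^ 2 + b ^ 2 * Real.sin θ ^ 2)) ≤ π / (2 * B n) := by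
    intro n
    obtain ⟨h1, h2, _⟩ := hP n
    have := gaussG_bounds (A n) (B n) h1 h2
    rw [gaussG_tan (A n) (B n) (h1.trans_le h2) h1, ← hG n] at this
    exact this
  -- limit
  have hMpos : 0 < M := by
    have h : b ≤ M := ge_of_tendsto' hMB (fun n => (hP n).2.2)
    linarith
  have hta : Tendsto (fun n => π / (2 * A n)) atTop (nhds (π / (2 * M))) :=
    tendsto_const_nhds.div (hMA.const_mul 2) (by positivity)
  have htb : Tendsto (fun n => π / (2 * B n)) atTop (nhds (π / (2 * M))) :=
    tendsto_const_nhds.div (hMB.const_mul 2) (by positivity)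
  have h1 : π / (2 * M) ≤ _ := le_of_tendsto hta (Eventually.of_forall fun n => (hbound n).1)
  have h2 := ge_of_tendsto htb (Eventually.of_forall fun n => (hbound n).2)
  linarith
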